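/- For any graph G of order n, γ_{StR}(G) ≤ n − ⌊Δ(G)/2⌋. -/

import Mathlib

namespace SimpleGraph

variable {V : Type*}

/-- The degree of a vertex (cardinality of its open neighborhood). -/
noncomputable def deg (G : SimpleGraph V) (v : V) : ℕ := (G.neighborSet v).ncard

/-- Maximum degree. -/
noncomputable def maxDeg [Fintype V] (G : SimpleGraph V) : ℕ :=
  Finset.univ.sup fun v => G.deg v

/-- A strong Roman dominating function: `f : V → {0,1,...,⌈Δ/2⌉+1}` such that every vertex
with value 0 has a neighbor `w` with `f w ≥ 2` and `f w ≥ 1 + ⌈|N(w) ∩ B₀|/2⌉`. -/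
def IsStRDF [Fintype V] (G : SimpleGraph V) (f : V → ℕ) : Prop :=
  (∀ v, f v ≤ (G.maxDeg + 1) / 2 + 1) ∧
  ∀ v, f v = 0 → ∃ w, G.Adj v w ∧ 2 ≤ f w ∧
    1 + ((G.neighborSet w ∩ {u | f u = 0}).ncard + 1) / 2 ≤ f w

/-- The strong Roman domination number. -/
noncomputable def gammaStR [Fintype V] (G : SimpleGraph V) : ℕ :=
  sInf {k | ∃ f, G.IsStRDF f ∧ ∑ v, f v = k}

/-- A Roman dominating function. -/
def IsRDF (G : SimpleGraph V) (f : V → ℕ) : Prop :=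
  (∀ v, f v ≤ 2) ∧ ∀ v, f v = 0 → ∃ w, G.Adj v w ∧ f w = 2

/-- The Roman domination number. -/
noncomputable def gammaR [Fintype V] (G : SimpleGraph V) : ℕ :=
  sInf {k | ∃ f, G.IsRDF f ∧ ∑ v, f v = k}

/-- A dominating set. -/
def IsDomSet (G : SimpleGraph V) (D : Set V) : Prop :=
  ∀ v ∉ D, ∃ w ∈ D, G.Adj v w

/-- The domination number. -/
noncomputable def gammaDom [Fintype V] (G : SimpleGraph V) : ℕ :=
  sInf {k | ∃ D : Set V, G.IsDomSet D ∧ D.ncard = k}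

end SimpleGraph

/-- For any graph `G` of order `n`, `γ_{StR}(G) ≤ n − ⌊Δ(G)/2⌋`. -/
theorem stmt2 {V : Type*} [Fintype V] (G : SimpleGraph V) :
    G.gammaStR ≤ Fintype.card V - G.maxDeg / 2 := by
  classical
  rcases isEmpty_or_nonempty V with hV | hV
  · have h0 : G.gammaStR ≤ 0 := by
      apply Nat.sInf_le
      refine ⟨fun _ => 0, ⟨fun v => (IsEmpty.false v).elim, fun v => (IsEmpty.false v).elim⟩, ?_⟩
      simp
    omega
  · obtain ⟨v, -, hv⟩ := Finset.exists_mem_eq_sup Finset.univ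
      ⟨Classical.arbitrary V, Finset.mem_univ _⟩ (fun v => G.deg v)
    have hdeg : G.deg v = G.degree v := by
      simp [SimpleGraph.deg, SimpleGraph.degree, SimpleGraph.neighborFinset,
        Set.ncard_eq_toFinset_card']
    have hΔ : G.maxDeg = G.degree v := by rw [SimpleGraph.maxDeg, hv, hdeg]
    set c : ℕ := (G.maxDeg + 1) / 2 + 1 with hc
    set f : V → ℕ := fun u => if u = v then c else if G.Adj v u then 0 else 1 with hf
    have hfv : f v = c := by simp [hf]
    have hc1 : 1 ≤ c := by omega
    -- the StRDF property
    have hStRDF : G.IsStRDF f := by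
      constructor
      · intro u
        by_cases h1 : u = v
        · simp [hf, h1]; omega
        · by_cases h2 : G.Adj v u <;> simp [hf, h1, h2] <;> omega
      · intro u hu
        have hune : u ≠ v := by
          intro h; rw [h, hfv] at hu; omega
        have hadj : G.Adj v u := by
          by_contra h
          simp [hf, hune, h] at hu
        refine ⟨v, hadj.symm, ?_, ?_⟩
        · -- 2 ≤ f v : need maxDeg ≥ 1
          have h1 : 1 ≤ G.deg v := by
            rw [SimpleGraph.deg]
            have : u ∈ G.neighborSet v := hadj
            have := Set.ncard_pos (s := G.neighborSet v) (Set.toFinite _)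
            exact this.mpr ⟨u, hadj⟩
          rw [hdeg] at h1; rw [hfv]; omega
        · have hm : (G.neighborSet v ∩ {u | f u = 0}).ncard ≤ G.maxDeg := by
            calc (G.neighborSet v ∩ {u | f u = 0}).ncard
                ≤ (G.neighborSet v).ncard :=
                  Set.ncard_le_ncard Set.inter_subset_left (Set.toFinite _)
              _ = G.deg v := rfl
              _ ≤ G.maxDeg := by rw [SimpleGraph.maxDeg, hv]
          rw [hfv]
          omega
    -- the sum
    have hfilter : (Finset.univ.erase v).filter (fun u => G.Adj v u) = G.neighborFinset v := by
      ext u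
      simp only [Finset.mem_filter, Finset.mem_erase, Finset.mem_univ, true_and,
        SimpleGraph.mem_neighborFinset]
      constructor
      · exact fun h => h.2
      · exact fun h => ⟨⟨h.ne', trivial⟩, h⟩
    have hsum : ∑ u, f u = Fintype.card V - G.maxDeg / 2 := by
      have h1 : ∑ u ∈ Finset.univ.erase v, f u + f v = ∑ u, f u :=
        Finset.sum_erase_add _ _ (Finset.mem_univ v)
      have h2 : ∑ u ∈ Finset.univ.erase v, f u
          = ((Finset.univ.erase v).filter (fun u => ¬ G.Adj v u)).card := by
        rw [Finset.card_filter]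
        apply Finset.sum_congr rfl
        intro u hu
        have : u ≠ v := (Finset.mem_erase.mp hu).1
        simp only [hf, this, if_false]
        by_cases h : G.Adj v u <;> simp [h]
      have h3 : ((Finset.univ.erase v).filter (fun u => ¬ G.Adj v u)).card
          = (Fintype.card V - 1) - G.degree v := by
        have := Finset.card_filter_add_card_filter_not
          (s := Finset.univ.erase v) (p := fun u => G.Adj v u)
        rw [hfilter] at this
        have hcard : (Finset.univ.erase v).card = Fintype.card V - 1 := by
          rw [Finset.card_erase_of_mem (Finset.mem_univ v), Finset.card_univ]
        rw [hcard] at this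
        have : G.degree v + ((Finset.univ.erase v).filter (fun u => ¬ G.Adj v u)).card
            = Fintype.card V - 1 := this
        omega
      have hdle : G.degree v < Fintype.card V := G.degree_lt_card_verts v
      have hcpos : 1 ≤ Fintype.card V := Fintype.card_pos
      rw [← h1, h2, h3, hfv, hΔ, hc]
      omega
    exact Nat.sInf_le ⟨f, hStRDF, hsum⟩
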